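/- arXiv:1205.4382 — 2 statements merged into one kernel-verified Lean document; each statement's English description precedes it below -/
import Mathlib

section
/- (Disconnecting Lemma) Let G = (V,E) be a finite simple connected graph and p : V → ℝ² a map in general position. Suppose that after removing k edges e₁ = {i₁,j₁}, ..., e_k = {i_k,j_k} the graph becomes the disjoint union of two connected graphs G₁ = (V₁,E₁) and G₂ = (V₂,E₂) (so V₁ ∩ V₂ = ∅, V₁ ∪ V₂ = V, E₁ ∪ E₂ ∪ {e₁,...,e_k} = E), with i₁,...,i_k ∈ V₁ and j₁,...,j_k ∈ V₂. Let V₃ = {i₁,...,i_k}, V₄ = {j₁,...,j_k}, and let E₅ be the union of all edges of the complete graphs on V₃ and on V₄ together with {e₁,...,e_k}. If s_p(E₅) = 0, then s_p(E) = s_p(E₁) + s_p(E₂). -/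
noncomputable section

open Classical in
/-- The edge vector of the pair `(i, j)` under the realization `p`: the function `V → ℝ × ℝ`
whose value is `p i - p j` at `i`, `p j - p i` at `j`, and `0` elsewhere. -/
def edgeVec {V : Type*} (p : V → ℝ × ℝ) (i j : V) : V → ℝ × ℝ :=
  fun v => if v = i then p i - p j else if v = j then p j - p i else 0

/-- The set of edge vectors of a set `F` of (potential) edges under the realization `p`. -/
def edgeVecs {V : Type*} (p : V → ℝ × ℝ) (F : Set (Sym2 V)) : Set (V → ℝ × ℝ) :=
  {x | ∃ i j, s(i, j) ∈ F ∧ x = edgeVec p i j}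

/-- The rank of the edge vectors of `F` under the realization `p`. -/
def rankOf {V : Type*} (p : V → ℝ × ℝ) (F : Set (Sym2 V)) : ℕ :=
  Module.finrank ℝ (Submodule.span ℝ (edgeVecs p F))

/-- The generic rank of a set of edges: the maximum over all realizations `p` of the rank. -/
def genRankSet {V : Type*} (F : Set (Sym2 V)) : ℕ :=
  ⨆ p : V → ℝ × ℝ, rankOf p F

/-- The generic rank `r(G)` of a graph. -/
def genRank {V : Type*} (G : SimpleGraph V) : ℕ := genRankSet G.edgeSet

/-- The stress number `s_p(F)` of a set of edges under the realization `p`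
(the dimension of the space of resolvable stresses). -/
def stressNum {V : Type*} (p : V → ℝ × ℝ) (F : Set (Sym2 V)) : ℕ :=
  F.ncard - rankOf p F

/-- The generic stress number `s(F)` of a set of edges. -/
def genStressSet {V : Type*} (F : Set (Sym2 V)) : ℕ := F.ncard - genRankSet F

/-- The generic stress number `s(G)` of a graph. -/
def genStress {V : Type*} (G : SimpleGraph V) : ℕ := G.edgeSet.ncard - genRank G

/-- A planar configuration is in general position if it is injective and no three distinct
vertices have collinear images. -/
def GeneralPosition {V : Type*} (p : V → ℝ × ℝ) : Prop :=
  Function.Injective p ∧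
    ∀ i j k : V, i ≠ j → j ≠ k → i ≠ k →
      ¬ Collinear ℝ ({p i, p j, p k} : Set (ℝ × ℝ))

/-- `W_U`: the subspace of functions `V → ℝ × ℝ` vanishing at every vertex outside `U`. -/
def vanishOn {V : Type*} (U : Set V) : Submodule ℝ (V → ℝ × ℝ) where
  carrier := {f | ∀ v ∉ U, f v = 0}
  zero_mem' := fun v _ => rfl
  add_mem' := by
    intro a b ha hb v hv
    simp [Pi.add_apply, ha v hv, hb v hv]
  smul_mem' := by
    intro c f hf v hv
    simp [Pi.smul_apply, hf v hv]

end

noncomputable section DL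
set_option linter.unusedSectionVars false
variable {V : Type*} [Fintype V]

lemma dl_edgeVec_comm (p : V → ℝ × ℝ) (i j : V) : edgeVec p i j = edgeVec p j i := by
  funext v
  by_cases h1 : v = i <;> by_cases h2 : v = j <;> simp_all [edgeVec]

def vecOf (p : V → ℝ × ℝ) (e : Sym2 V) : V → ℝ × ℝ :=
  Sym2.lift ⟨edgeVec p, fun i j => dl_edgeVec_comm p i j⟩ e

@[simp] lemma dl_vecOf_mk (p : V → ℝ × ℝ) (i j : V) : vecOf p s(i, j) = edgeVec p i j := rfl

lemma dl_edgeVecs_eq (p : V → ℝ × ℝ) (F : Set (Sym2 V)) : edgeVecs p F = vecOf p '' F := by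
  ext x
  constructor
  · rintro ⟨i, j, hf, rfl⟩; exact ⟨s(i, j), hf, rfl⟩
  · rintro ⟨e, he, rfl⟩
    revert he
    induction e using Sym2.ind with
    | _ i j => intro he; exact ⟨i, j, he, rfl⟩

def dlCross (x y : ℝ × ℝ) : ℝ := x.1 * y.2 - x.2 * y.1

def dlSumL : (V → ℝ × ℝ) →ₗ[ℝ] ℝ × ℝ where
  toFun f := ∑ v, f v
  map_add' f g := by simp [Finset.sum_add_distrib]
  map_smul' c f := by simp [Finset.smul_sum]

def dlMomL (p : V → ℝ × ℝ) : (V → ℝ × ℝ) →ₗ[ℝ] ℝ where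
  toFun f := ∑ v, dlCross (p v) (f v)
  map_add' f g := by
    rw [← Finset.sum_add_distrib]
    apply Finset.sum_congr rfl
    intro v _
    simp [dlCross, Prod.fst_add, Prod.snd_add]; ring
  map_smul' c f := by
    simp only [RingHom.id_apply, smul_eq_mul]
    rw [Finset.mul_sum]
    apply Finset.sum_congr rfl
    intro v _
    simp [dlCross, Prod.smul_fst, Prod.smul_snd, smul_eq_mul]; ring

@[simp] lemma dlSumL_apply (f : V → ℝ × ℝ) : dlSumL f = ∑ v, f v := rfl
@[simp] lemma dlMomL_apply (p : V → ℝ × ℝ) (f : V → ℝ × ℝ) :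
    dlMomL p f = ∑ v, dlCross (p v) (f v) := rfl

lemma dl_sumL_edgeVec (p : V → ℝ × ℝ) (i j : V) : dlSumL (edgeVec p i j) = 0 := by
  classical
  have key : ∀ v, edgeVec p i j v =
      (if v = i then p i - p j else 0) + (if v = j then p j - p i else 0) := by
    intro v
    by_cases h1 : v = i <;> by_cases h2 : v = j <;> simp_all [edgeVec]
  show (∑ v, edgeVec p i j v) = 0
  simp only [key, Finset.sum_add_distrib, Finset.sum_ite_eq', Finset.mem_univ, if_true]
  abel

lemma dl_momL_edgeVec (p : V → ℝ × ℝ) (i j : V) : dlMomL p (edgeVec p i j) = 0 := by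
  classical
  have key : ∀ v, dlCross (p v) (edgeVec p i j v) =
      (if v = i then dlCross (p i) (p i - p j) else 0)
        + (if v = j then dlCross (p j) (p j - p i) else 0) := by
    intro v
    by_cases h1 : v = i <;> by_cases h2 : v = j <;>
      simp_all [edgeVec, dlCross]
  show (∑ v, dlCross (p v) (edgeVec p i j v)) = 0
  simp only [key, Finset.sum_add_distrib, Finset.sum_ite_eq', Finset.mem_univ, if_true]
  simp [dlCross, Prod.fst_sub, Prod.snd_sub]
  ring


lemma dl_cross_eq_zero {x y : ℝ × ℝ} (hx : x ≠ 0) (h : dlCross x y = 0) :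
    ∃ c : ℝ, y = c • x := by
  obtain ⟨x1, x2⟩ := x
  obtain ⟨y1, y2⟩ := y
  simp only [dlCross, sub_eq_zero] at h
  by_cases h1 : x1 = 0
  · have h2 : x2 ≠ 0 := by
      intro h2; exact hx (by simp [Prod.ext_iff, h1, h2])
    have hy1 : y1 = 0 := by
      have := h; rw [h1] at this
      simpa [h2] using this.symm
    refine ⟨y2 / x2, ?_⟩
    simp [Prod.ext_iff, h1, hy1, smul_eq_mul]
    field_simp
  · refine ⟨y1 / x1, ?_⟩
    simp only [Prod.ext_iff, Prod.smul_mk, smul_eq_mul]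
    constructor
    · field_simp
    · field_simp
      linarith [h]

lemma dl_cross_spans {x y : ℝ × ℝ} (h : dlCross x y ≠ 0) (z : ℝ × ℝ) :
    ∃ c d : ℝ, z = c • x + d • y := by
  refine ⟨dlCross z y / dlCross x y, dlCross x z / dlCross x y, ?_⟩
  obtain ⟨x1, x2⟩ := x
  obtain ⟨y1, y2⟩ := y
  obtain ⟨z1, z2⟩ := z
  simp only [dlCross] at h ⊢
  simp only [Prod.ext_iff, Prod.smul_mk, Prod.mk_add_mk, smul_eq_mul]
  constructor <;> rw [div_mul_eq_mul_div, div_mul_eq_mul_div, ← add_div, eq_div_iff h] <;> ring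

lemma dl_gp_cross (p : V → ℝ × ℝ) (hp : GeneralPosition p) {i j k : V}
    (hij : i ≠ j) (hjk : j ≠ k) (hik : i ≠ k) :
    dlCross (p i - p j) (p i - p k) ≠ 0 := by
  intro h
  apply hp.2 i j k hij hjk hik
  have hx : p i - p j ≠ 0 := sub_ne_zero.2 fun e => hij (hp.1 e)
  obtain ⟨c, hc⟩ := dl_cross_eq_zero hx h
  rw [collinear_iff_of_mem (Set.mem_insert (p i) _)]
  refine ⟨p i - p j, ?_⟩
  intro q hq
  simp only [Set.mem_insert_iff, Set.mem_singleton_iff] at hq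
  rcases hq with rfl | rfl | rfl
  · exact ⟨0, by simp⟩
  · exact ⟨-1, by rw [vadd_eq_add, neg_smul, one_smul]; abel⟩
  · exact ⟨-c, by rw [vadd_eq_add, neg_smul, ← hc]; abel⟩

def dlClique (p : V → ℝ × ℝ) (S : Set V) : Set (V → ℝ × ℝ) :=
  {x | ∃ i ∈ S, ∃ j ∈ S, i ≠ j ∧ x = edgeVec p i j}

lemma dl_clique_mono (p : V → ℝ × ℝ) {S T : Set V} (h : S ⊆ T) :
    dlClique p S ⊆ dlClique p T := by
  rintro x ⟨i, hi, j, hj, hij, rfl⟩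
  exact ⟨i, h hi, j, h hj, hij, rfl⟩

lemma dl_equil_mem_span (p : V → ℝ × ℝ) (hp : GeneralPosition p) :
    ∀ (S : Finset V) (f : V → ℝ × ℝ), (∀ v ∉ S, f v = 0) → dlSumL f = 0 → dlMomL p f = 0 →
      f ∈ Submodule.span ℝ (dlClique p ↑S) := by
  classical
  intro S
  induction S using Finset.strongInduction with
  | _ S ih =>
    intro f hsupp hL hM
    by_cases h0 : S.card ≤ 1
    · have hf0 : f = 0 := by
        funext v
        by_cases hv : v ∈ S
        · have hone : ∀ w, w ∈ S → w = v := by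
            intro w hw
            by_contra hne
            exact absurd (Finset.one_lt_card.2 ⟨w, hw, v, hv, hne⟩) (by omega)
          have hsum : (∑ w, f w) = f v := by
            apply Finset.sum_eq_single_of_mem v (Finset.mem_univ v)
            intro b _ hb
            by_cases hbS : b ∈ S
            · exact absurd (hone b hbS) hb
            · exact hsupp b hbS
          have : (∑ w, f w) = 0 := hL
          rw [hsum] at this
          simpa using this
        · exact hsupp v hv
      rw [hf0]; exact Submodule.zero_mem _
    · push_neg at h0
      by_cases h2 : S.card = 2
      · obtain ⟨u, w, huw, rfl⟩ := Finset.card_eq_two.1 h2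
        have hu : u ∈ ({u, w} : Finset V) := by simp
        have hw : w ∈ ({u, w} : Finset V) := by simp
        have hsum : (∑ v, f v) = f u + f w := by
          rw [← Finset.sum_subset (Finset.subset_univ ({u, w} : Finset V))
            (fun x _ hx => hsupp x hx)]
          exact Finset.sum_pair huw
        have hfw : f w = - f u := by
          have : (∑ v, f v) = 0 := hL
          rw [hsum] at this
          exact eq_neg_of_add_eq_zero_right this
        have hmsum : dlCross (p u) (f u) + dlCross (p w) (f w) = 0 := by
          have : (∑ v, dlCross (p v) (f v)) = 0 := hM
          rw [← Finset.sum_subset (Finset.subset_univ ({u, w} : Finset V))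
            (fun x _ hx => by rw [hsupp x hx]; simp [dlCross])] at this
          rwa [Finset.sum_pair huw] at this
        have hx : p u - p w ≠ 0 := sub_ne_zero.2 fun e => huw (hp.1 e)
        have hcr : dlCross (p u - p w) (f u) = 0 := by
          rw [hfw] at hmsum
          simp only [dlCross, Prod.fst_sub, Prod.snd_sub, Prod.fst_neg, Prod.snd_neg] at hmsum ⊢
          linarith
        obtain ⟨c, hc⟩ := dl_cross_eq_zero hx hcr
        have hfc : f = c • edgeVec p u w := by
          funext v
          by_cases h1 : v = u
          · subst h1
            simp only [Pi.smul_apply, edgeVec, if_pos rfl]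
            exact hc
          · by_cases h2' : v = w
            · subst h2'
              simp only [Pi.smul_apply, edgeVec, if_neg h1]
              rw [hfw, hc, ← smul_neg, neg_sub]
              simp
            · have : v ∉ ({u, w} : Finset V) := by simp [h1, h2']
              simp only [Pi.smul_apply, edgeVec, if_neg h1, if_neg h2', smul_zero]
              exact hsupp v this
        rw [hfc]
        exact Submodule.smul_mem _ _
          (Submodule.subset_span ⟨u, by simp, w, by simp, huw, rfl⟩)
      · have h3 : 3 ≤ S.card := by omega
        obtain ⟨v₀, hv₀⟩ := Finset.card_pos.1 (show 0 < S.card by omega)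
        have hc1 : 2 ≤ (S.erase v₀).card := by
          rw [Finset.card_erase_of_mem hv₀]; omega
        obtain ⟨u, hu⟩ := Finset.card_pos.1 (by omega : 0 < (S.erase v₀).card)
        have hc2 : 1 ≤ ((S.erase v₀).erase u).card := by
          rw [Finset.card_erase_of_mem hu]; omega
        obtain ⟨w, hw⟩ := Finset.card_pos.1 (by omega : 0 < ((S.erase v₀).erase u).card)
        obtain ⟨hwu, hw'⟩ := Finset.mem_erase.1 hw
        obtain ⟨hwv₀, hwS⟩ := Finset.mem_erase.1 hw'
        obtain ⟨huv₀, huS⟩ := Finset.mem_erase.1 hu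
        have hD := dl_gp_cross p hp (Ne.symm huv₀) (Ne.symm hwu) (Ne.symm hwv₀)
        obtain ⟨c, d, hcd⟩ := dl_cross_spans hD (f v₀)
        set g : V → ℝ × ℝ := f - c • edgeVec p v₀ u - d • edgeVec p v₀ w with hg
        have hgsupp : ∀ v ∉ S.erase v₀, g v = 0 := by
          intro v hv
          rw [Finset.mem_erase] at hv
          push_neg at hv
          by_cases hvS : v ∈ S
          · have hvv₀ : v = v₀ := by
              by_contra hne
              exact (hv hne) hvS
            subst hvv₀
            simp only [hg, Pi.sub_apply, Pi.smul_apply, edgeVec, if_pos rfl]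
            rw [hcd, sub_sub]; exact sub_self _
          · have h1 : v ≠ v₀ := fun h => hvS (h ▸ hv₀)
            have h2 : v ≠ u := fun h => hvS (h ▸ huS)
            have h3 : v ≠ w := fun h => hvS (h ▸ hwS)
            simp only [hg, Pi.sub_apply, Pi.smul_apply, edgeVec, if_neg h1, if_neg h2, if_neg h3,
              smul_zero, hsupp v hvS]
            abel
        have hgL : dlSumL g = 0 := by
          rw [hg]
          rw [map_sub, map_sub, map_smul, map_smul, hL, dl_sumL_edgeVec, dl_sumL_edgeVec]
          simp
        have hgM : dlMomL p g = 0 := by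
          rw [hg]
          rw [map_sub, map_sub, map_smul, map_smul, hM, dl_momL_edgeVec, dl_momL_edgeVec]
          simp
        have hgspan := ih (S.erase v₀) (Finset.erase_ssubset hv₀) g hgsupp hgL hgM
        have hmono : dlClique p ↑(S.erase v₀) ⊆ dlClique p ↑S :=
          dl_clique_mono p (by intro x hx; exact (Finset.mem_coe.2 (Finset.mem_of_mem_erase (Finset.mem_coe.1 hx))))
        have hgspan' : g ∈ Submodule.span ℝ (dlClique p ↑S) :=
          Submodule.span_mono hmono hgspan
        have hfg : f = g + c • edgeVec p v₀ u + d • edgeVec p v₀ w := by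
          rw [hg]; abel
        rw [hfg]
        refine Submodule.add_mem _ (Submodule.add_mem _ hgspan' ?_) ?_
        · exact Submodule.smul_mem _ _
            (Submodule.subset_span ⟨v₀, hv₀, u, huS, Ne.symm huv₀, rfl⟩)
        · exact Submodule.smul_mem _ _
            (Submodule.subset_span ⟨v₀, hv₀, w, hwS, Ne.symm hwv₀, rfl⟩)

lemma dl_edgeVec_apply_self (p : V → ℝ × ℝ) (i j : V) : edgeVec p i j i = p i - p j := by
  simp [edgeVec]

lemma dl_edgeVec_apply_other (p : V → ℝ × ℝ) {i j v : V} (h1 : v ≠ i) (h2 : v ≠ j) :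
    edgeVec p i j v = 0 := by
  simp [edgeVec, h1, h2]

lemma dl_edgeVec_inj (p : V → ℝ × ℝ) (hp : Function.Injective p) {i j k l : V}
    (hij : i ≠ j) (hkl : k ≠ l) (h : edgeVec p i j = edgeVec p k l) : s(i, j) = s(k, l) := by
  have key : ∀ (x y u v : V), x ≠ y → edgeVec p x y = edgeVec p u v → (x = u ∨ x = v) := by
    intro x y u v hxy he
    by_contra hcon
    push_neg at hcon
    have h1 : edgeVec p x y x = p x - p y := dl_edgeVec_apply_self p x y
    have h2 : edgeVec p u v x = 0 := dl_edgeVec_apply_other p hcon.1 hcon.2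
    rw [he, h2] at h1
    exact hxy (hp (sub_eq_zero.1 h1.symm))
  have hi := key i j k l hij h
  have hj := key j i k l (Ne.symm hij) (by rw [← dl_edgeVec_comm, h, dl_edgeVec_comm])
  rcases hi with rfl | rfl
  · rcases hj with rfl | rfl
    · exact absurd rfl hij
    · rfl
  · rcases hj with rfl | rfl
    · exact Sym2.eq_swap
    · exact absurd rfl hij

lemma dl_vecOf_inj (p : V → ℝ × ℝ) (hp : Function.Injective p) {e e' : Sym2 V}
    (he : ¬ e.IsDiag) (he' : ¬ e'.IsDiag) (h : vecOf p e = vecOf p e') : e = e' := by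
  revert he he' h
  induction e using Sym2.ind with
  | _ i j =>
    induction e' using Sym2.ind with
    | _ k l =>
      intro he he' h
      rw [Sym2.mk_isDiag_iff] at he he'
      exact dl_edgeVec_inj p hp he he' h

lemma dl_edgeVecs_union (p : V → ℝ × ℝ) (F₁ F₂ : Set (Sym2 V)) :
    edgeVecs p (F₁ ∪ F₂) = edgeVecs p F₁ ∪ edgeVecs p F₂ := by
  rw [dl_edgeVecs_eq, dl_edgeVecs_eq, dl_edgeVecs_eq, Set.image_union]

lemma dl_mem_vanish {U : Set V} {f : V → ℝ × ℝ} : f ∈ vanishOn U ↔ ∀ v ∉ U, f v = 0 :=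
  Iff.rfl

lemma dl_rank_le (p : V → ℝ × ℝ) (F : Set (Sym2 V)) : rankOf p F ≤ F.ncard := by
  classical
  rw [rankOf, dl_edgeVecs_eq]
  have hF : F.Finite := Set.toFinite F
  haveI : Fintype (vecOf p '' F : Set _) := (hF.image _).fintype
  calc Module.finrank ℝ (Submodule.span ℝ (vecOf p '' F)) ≤ (vecOf p '' F).toFinset.card :=
        finrank_span_le_card _
    _ = (vecOf p '' F).ncard := (Set.ncard_eq_toFinset_card' _).symm
    _ ≤ F.ncard := Set.ncard_image_le hF

end DL

/-- **Disconnecting Lemma.** Suppose the connected graph `G` becomes the disjoint union of two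
connected graphs `G₁ = (V₁, E₁)` and `G₂ = (V₂, E₂)` upon removing the `k` edges
`{a t, b t}` (`t : Fin k`) with `a t ∈ V₁` and `b t ∈ V₂`.  Let `E₅` consist of all edges of
the complete graphs on `V₃ = {a t}` and on `V₄ = {b t}` together with the removed edges.
If `s_p(E₅) = 0`, then `s_p(E) = s_p(E₁) + s_p(E₂)`. -/
theorem disconnecting_lemma {V : Type*} [Fintype V] (G : SimpleGraph V)
    (hG : G.Connected) (p : V → ℝ × ℝ) (hp : GeneralPosition p)
    (k : ℕ) (a b : Fin k → V) (V₁ V₂ : Set V)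
    (hdisj : Disjoint V₁ V₂) (hcover : V₁ ∪ V₂ = Set.univ)
    (ha : ∀ t, a t ∈ V₁) (hb : ∀ t, b t ∈ V₂)
    (hadj : ∀ t, G.Adj (a t) (b t))
    (E₁ E₂ : Set (Sym2 V))
    (hE₁ : E₁ = {e ∈ G.edgeSet | ∀ v ∈ e, v ∈ V₁})
    (hE₂ : E₂ = {e ∈ G.edgeSet | ∀ v ∈ e, v ∈ V₂})
    (hE : G.edgeSet = E₁ ∪ E₂ ∪ {e | ∃ t, e = s(a t, b t)})
    (h₁ : (G.induce V₁).Connected) (h₂ : (G.induce V₂).Connected)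
    (E₅ : Set (Sym2 V))
    (hE₅ : E₅ = {e | ∃ x ∈ Set.range a, ∃ y ∈ Set.range a, x ≠ y ∧ e = s(x, y)}
      ∪ {e | ∃ x ∈ Set.range b, ∃ y ∈ Set.range b, x ≠ y ∧ e = s(x, y)}
      ∪ {e | ∃ t, e = s(a t, b t)})
    (h₅ : stressNum p E₅ = 0) :
    stressNum p G.edgeSet = stressNum p E₁ + stressNum p E₂ := by
  classical
  set Cut : Set (Sym2 V) := {e | ∃ t, e = s(a t, b t)} with hCutdef
  set K₃ : Set (Sym2 V) :=
    {e | ∃ x ∈ Set.range a, ∃ y ∈ Set.range a, x ≠ y ∧ e = s(x, y)} with hK₃def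
  set K₄ : Set (Sym2 V) :=
    {e | ∃ x ∈ Set.range b, ∃ y ∈ Set.range b, x ≠ y ∧ e = s(x, y)} with hK₄def
  have hV₁₂ : ∀ v, v ∈ V₁ → v ∉ V₂ := fun v hv => Set.disjoint_left.1 hdisj hv
  have hV₂₁ : ∀ v, v ∈ V₂ → v ∉ V₁ := fun v hv => Set.disjoint_right.1 hdisj hv
  have hab : ∀ t, a t ≠ b t := fun t h => hV₁₂ (a t) (ha t) (h ▸ hb t)
  have hmem₁ : ∀ e ∈ E₁, ∀ v ∈ e, v ∈ V₁ := by
    rw [hE₁]; rintro e ⟨-, h⟩; exact h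
  have hmem₂ : ∀ e ∈ E₂, ∀ v ∈ e, v ∈ V₂ := by
    rw [hE₂]; rintro e ⟨-, h⟩; exact h
  have hmemK₃ : ∀ e ∈ K₃, ∀ v ∈ e, v ∈ V₁ := by
    rintro e ⟨x, ⟨t, rfl⟩, y, ⟨t', rfl⟩, hxy, rfl⟩ v hv
    rcases Sym2.mem_iff.1 hv with rfl | rfl
    · exact ha t
    · exact ha t'
  have hmemK₄ : ∀ e ∈ K₄, ∀ v ∈ e, v ∈ V₂ := by
    rintro e ⟨x, ⟨t, rfl⟩, y, ⟨t', rfl⟩, hxy, rfl⟩ v hv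
    rcases Sym2.mem_iff.1 hv with rfl | rfl
    · exact hb t
    · exact hb t'
  have hnot12 : ∀ e : Sym2 V, (∀ v ∈ e, v ∈ V₁) → ¬ (∀ v ∈ e, v ∈ V₂) := by
    intro e
    induction e using Sym2.ind with
    | _ i j =>
      intro h1 h2
      exact hV₁₂ i (h1 i (Sym2.mem_mk_left i j)) (h2 i (Sym2.mem_mk_left i j))
  have hd₁₂ : Disjoint E₁ E₂ :=
    Set.disjoint_left.2 fun {e} he1 he2 => hnot12 e (hmem₁ _ he1) (hmem₂ _ he2)
  have hdC₁ : Disjoint E₁ Cut := Set.disjoint_left.2 (by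
    rintro e he ⟨t, rfl⟩
    exact hV₂₁ (b t) (hb t) (hmem₁ _ he (b t) (Sym2.mem_mk_right _ _)))
  have hdC₂ : Disjoint E₂ Cut := Set.disjoint_left.2 (by
    rintro e he ⟨t, rfl⟩
    exact hV₁₂ (a t) (ha t) (hmem₂ _ he (a t) (Sym2.mem_mk_left _ _)))
  have hdK₃C : Disjoint K₃ Cut := Set.disjoint_left.2 (by
    rintro e he ⟨t, rfl⟩
    exact hV₂₁ (b t) (hb t) (hmemK₃ _ he (b t) (Sym2.mem_mk_right _ _)))
  have hdK₄C : Disjoint K₄ Cut := Set.disjoint_left.2 (by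
    rintro e he ⟨t, rfl⟩
    exact hV₁₂ (a t) (ha t) (hmemK₄ _ he (a t) (Sym2.mem_mk_left _ _)))
  have hdK₃₄ : Disjoint K₃ K₄ :=
    Set.disjoint_left.2 fun {e} he1 he2 => hnot12 e (hmemK₃ _ he1) (hmemK₄ _ he2)
  have hndiag₅ : ∀ e ∈ E₅, ¬ e.IsDiag := by
    rw [hE₅]
    rintro e ((⟨x, hx, y, hy, hxy, rfl⟩ | ⟨x, hx, y, hy, hxy, rfl⟩) | ⟨t, rfl⟩) <;>
      rw [Sym2.mk_isDiag_iff]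
    · exact hxy
    · exact hxy
    · exact hab t
  have hsubK₅ : K₃ ∪ K₄ ⊆ E₅ := by rw [hE₅]; exact Set.subset_union_left
  have hsubC₅ : Cut ⊆ E₅ := by rw [hE₅]; exact Set.subset_union_right
  -- cardinality
  have hcard : G.edgeSet.ncard = E₁.ncard + E₂.ncard + Cut.ncard := by
    rw [hE, Set.ncard_union_eq (Set.disjoint_union_left.2 ⟨hdC₁, hdC₂⟩)
        (Set.toFinite _) (Set.toFinite _),
      Set.ncard_union_eq hd₁₂ (Set.toFinite _) (Set.toFinite _)]
  -- linear independence of the E₅ edge vectors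
  haveI : Fintype E₅ := (Set.toFinite E₅).fintype
  have hinjOn : Set.InjOn (vecOf p) E₅ := fun e he e' he' h =>
    dl_vecOf_inj p hp.1 (hndiag₅ e he) (hndiag₅ e' he') h
  have hrank₅ : rankOf p E₅ = E₅.ncard := by
    have h1 := dl_rank_le p E₅
    rw [stressNum] at h₅
    omega
  have hindep : LinearIndependent ℝ (fun e : E₅ => vecOf p (e : Sym2 V)) := by
    rw [linearIndependent_iff_card_eq_finrank_span]
    have h1 : Set.range (fun e : E₅ => vecOf p (e : Sym2 V)) = vecOf p '' E₅ :=
      (Set.image_eq_range _ _).symm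
    rw [h1]
    have h2 : (vecOf p '' E₅).finrank ℝ = rankOf p E₅ := by
      rw [Set.finrank, rankOf, dl_edgeVecs_eq]
    rw [h2, hrank₅, Set.ncard_eq_toFinset_card', Set.toFinset_card]
  -- the three submodules
  set A := Submodule.span ℝ (edgeVecs p E₁) with hAdef
  set B := Submodule.span ℝ (edgeVecs p E₂) with hBdef
  set C := Submodule.span ℝ (edgeVecs p Cut) with hCdef
  have hbound : ∀ (F : Set (Sym2 V)) (U : Set V), (∀ e ∈ F, ∀ v ∈ e, v ∈ U) →
      Submodule.span ℝ (edgeVecs p F) ≤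
        vanishOn U ⊓ (LinearMap.ker dlSumL ⊓ LinearMap.ker (dlMomL p)) := by
    intro F U hFU
    rw [Submodule.span_le]
    rintro x ⟨i, j, hij, rfl⟩
    refine Submodule.mem_inf.2 ⟨?_, Submodule.mem_inf.2 ⟨?_, ?_⟩⟩
    · refine dl_mem_vanish.2 fun v hv => ?_
      have h1 : v ≠ i := fun h => hv (h ▸ hFU _ hij i (Sym2.mem_mk_left i j))
      have h2 : v ≠ j := fun h => hv (h ▸ hFU _ hij j (Sym2.mem_mk_right i j))
      exact dl_edgeVec_apply_other p h1 h2
    · exact LinearMap.mem_ker.2 (dl_sumL_edgeVec p i j)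
    · exact LinearMap.mem_ker.2 (dl_momL_edgeVec p i j)
  have hAle := hbound E₁ V₁ hmem₁
  have hBle := hbound E₂ V₂ hmem₂
  -- A and B are disjoint
  have hvan : Disjoint (vanishOn V₁ : Submodule ℝ (V → ℝ × ℝ)) (vanishOn V₂) := by
    rw [Submodule.disjoint_def]
    intro f h1 h2
    funext v
    by_cases hv : v ∈ V₁
    · exact dl_mem_vanish.1 h2 v (hV₁₂ v hv)
    · exact dl_mem_vanish.1 h1 v hv
  have hdAB : Disjoint A B :=
    hvan.mono (hAle.trans inf_le_left) (hBle.trans inf_le_left)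
  -- C is disjoint from A ⊔ B
  have himg : ∀ T : Set (Sym2 V), T ⊆ E₅ →
      (fun e : E₅ => vecOf p (e : Sym2 V)) '' (Subtype.val ⁻¹' T) = vecOf p '' T := by
    intro T hT
    ext x
    constructor
    · rintro ⟨⟨e, he₅⟩, hme, rfl⟩; exact ⟨e, hme, rfl⟩
    · rintro ⟨e, hme, rfl⟩; exact ⟨⟨e, hT hme⟩, hme, rfl⟩
  have hdABC : Disjoint (A ⊔ B) C := by
    rw [Submodule.disjoint_def]
    intro z hzAB hzC
    have hCv : C ≤ vanishOn (Set.range a ∪ Set.range b) := by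
      rw [hCdef, Submodule.span_le]
      rintro x ⟨i, j, ⟨t, hte⟩, rfl⟩
      have hmem : i ∈ Set.range a ∪ Set.range b ∧ j ∈ Set.range a ∪ Set.range b := by
        rw [Sym2.eq_iff] at hte
        rcases hte with ⟨rfl, rfl⟩ | ⟨rfl, rfl⟩
        · exact ⟨Or.inl ⟨t, rfl⟩, Or.inr ⟨t, rfl⟩⟩
        · exact ⟨Or.inr ⟨t, rfl⟩, Or.inl ⟨t, rfl⟩⟩
      refine dl_mem_vanish.2 fun v hv => ?_
      exact dl_edgeVec_apply_other p (fun h => hv (h ▸ hmem.1)) (fun h => hv (h ▸ hmem.2))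
    have hz_supp : ∀ v, v ∉ Set.range a ∪ Set.range b → z v = 0 :=
      fun v hv => dl_mem_vanish.1 (hCv hzC) v hv
    rw [Submodule.mem_sup] at hzAB
    obtain ⟨y₁, hy₁, y₂, hy₂, rfl⟩ := hzAB
    have hy₁i := Submodule.mem_inf.1 (hAle hy₁)
    have hy₁k := Submodule.mem_inf.1 hy₁i.2
    have hy₂i := Submodule.mem_inf.1 (hBle hy₂)
    have hy₂k := Submodule.mem_inf.1 hy₂i.2
    have hy₁a : ∀ v ∉ (Set.range a).toFinset, y₁ v = 0 := by
      intro v hv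
      rw [Set.mem_toFinset] at hv
      by_cases hv1 : v ∈ V₁
      · have hz0 : y₁ v + y₂ v = 0 := by
          have := hz_supp v (by
            rintro (h | h)
            · exact hv h
            · obtain ⟨t, rfl⟩ := h
              exact hV₂₁ _ (hb t) hv1)
          simpa using this
        have hy₂0 : y₂ v = 0 := dl_mem_vanish.1 hy₂i.1 v (hV₁₂ v hv1)
        rw [hy₂0, add_zero] at hz0
        exact hz0
      · exact dl_mem_vanish.1 hy₁i.1 v hv1
    have hy₂b : ∀ v ∉ (Set.range b).toFinset, y₂ v = 0 := by
      intro v hv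
      rw [Set.mem_toFinset] at hv
      by_cases hv2 : v ∈ V₂
      · have hz0 : y₁ v + y₂ v = 0 := by
          have := hz_supp v (by
            rintro (h | h)
            · obtain ⟨t, rfl⟩ := h
              exact hV₁₂ _ (ha t) hv2
            · exact hv h)
          simpa using this
        have hy₁0 : y₁ v = 0 := dl_mem_vanish.1 hy₁i.1 v (hV₂₁ v hv2)
        rw [hy₁0, zero_add] at hz0
        exact hz0
      · exact dl_mem_vanish.1 hy₂i.1 v hv2
    have hy₁span := dl_equil_mem_span p hp (Set.range a).toFinset y₁ hy₁a
      (LinearMap.mem_ker.1 hy₁k.1) (LinearMap.mem_ker.1 hy₁k.2)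
    have hy₂span := dl_equil_mem_span p hp (Set.range b).toFinset y₂ hy₂b
      (LinearMap.mem_ker.1 hy₂k.1) (LinearMap.mem_ker.1 hy₂k.2)
    rw [Set.coe_toFinset] at hy₁span hy₂span
    have hsubK₃ : dlClique p (Set.range a) ⊆ vecOf p '' K₃ := by
      rintro x ⟨i, hi, j, hj, hij, rfl⟩
      exact ⟨s(i, j), ⟨i, hi, j, hj, hij, rfl⟩, rfl⟩
    have hsubK₄ : dlClique p (Set.range b) ⊆ vecOf p '' K₄ := by
      rintro x ⟨i, hi, j, hj, hij, rfl⟩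
      exact ⟨s(i, j), ⟨i, hi, j, hj, hij, rfl⟩, rfl⟩
    have hzK : y₁ + y₂ ∈ Submodule.span ℝ
        ((fun e : E₅ => vecOf p (e : Sym2 V)) '' (Subtype.val ⁻¹' (K₃ ∪ K₄))) := by
      rw [himg _ hsubK₅, Set.image_union, Submodule.span_union]
      exact Submodule.mem_sup.2 ⟨y₁, Submodule.span_mono hsubK₃ hy₁span,
        y₂, Submodule.span_mono hsubK₄ hy₂span, rfl⟩
    have hzC' : y₁ + y₂ ∈ Submodule.span ℝ
        ((fun e : E₅ => vecOf p (e : Sym2 V)) '' (Subtype.val ⁻¹' Cut)) := by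
      rw [himg _ hsubC₅, ← dl_edgeVecs_eq]
      exact hzC
    have hdisj' : Disjoint (Subtype.val ⁻¹' (K₃ ∪ K₄) : Set E₅) (Subtype.val ⁻¹' Cut) := by
      rw [Set.disjoint_left]
      rintro ⟨e, he⟩ hm hc
      simp only [Set.mem_preimage] at hm hc
      rcases hm with h | h
      · exact Set.disjoint_left.1 hdK₃C h hc
      · exact Set.disjoint_left.1 hdK₄C h hc
    exact Submodule.disjoint_def.1 (hindep.disjoint_span_image hdisj') _ hzK hzC'
  -- dimension of C
  have hrankC : Module.finrank ℝ C = Cut.ncard := by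
    have hC' : C = Submodule.span ℝ (vecOf p '' Cut) := by rw [hCdef, dl_edgeVecs_eq]
    haveI : Fintype (vecOf p '' Cut : Set _) := (Set.toFinite _).fintype
    have hind : LinearIndependent ℝ ((↑) : (vecOf p '' Cut : Set _) → (V → ℝ × ℝ)) := by
      refine LinearIndepOn.mono (R := ℝ) (v := id) ?_ (Set.image_mono hsubC₅)
      have h1 := hindep.linearIndepOn_id
      have h2 : Set.range (fun e : E₅ => vecOf p (e : Sym2 V)) = vecOf p '' E₅ :=
        (Set.image_eq_range _ _).symm
      rwa [h2] at h1
    rw [hC', finrank_span_set_eq_card hind, ← Set.ncard_eq_toFinset_card']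
    exact Set.ncard_image_of_injOn (hinjOn.mono hsubC₅)
  -- rank additivity
  have hfr1 : Module.finrank ℝ ((A ⊔ B : Submodule ℝ (V → ℝ × ℝ)) : Type _)
      = Module.finrank ℝ A + Module.finrank ℝ B := by
    have h := Submodule.finrank_sup_add_finrank_inf_eq A B
    rw [hdAB.eq_bot, finrank_bot, add_zero] at h
    exact h
  have hfr2 : Module.finrank ℝ ((A ⊔ B ⊔ C : Submodule ℝ (V → ℝ × ℝ)) : Type _)
      = Module.finrank ℝ (A ⊔ B : Submodule ℝ (V → ℝ × ℝ)) + Module.finrank ℝ C := by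
    have h := Submodule.finrank_sup_add_finrank_inf_eq (A ⊔ B) C
    rw [hdABC.eq_bot, finrank_bot, add_zero] at h
    exact h
  have hrankE : rankOf p G.edgeSet = rankOf p E₁ + rankOf p E₂ + Cut.ncard := by
    rw [rankOf, hE, dl_edgeVecs_union, dl_edgeVecs_union, Submodule.span_union,
      Submodule.span_union, ← hAdef, ← hBdef, ← hCdef, hfr2, hfr1, hrankC]
    rfl
  have hle₁ := dl_rank_le p E₁
  have hle₂ := dl_rank_le p E₂
  rw [stressNum, stressNum, stressNum, hcard, hrankE]
  omega
end

section
/- Let G = (V,E) be a finite simple graph with a vertex s of degree exactly 3 whose three incident edges are {s,i}, {s,j}, {s,k}, and suppose {i,j} ∉ E. Define G' = (V,E') with E' = (E ∪ {{i,j}}) \ {{s,i},{s,j},{s,k}}. Then the generic stress numbers satisfy s(G) ≤ s(G'). -/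
open Module Submodule

/-- cross product of two planar vectors -/
def crossP (a b : ℝ × ℝ) : ℝ := a.1 * b.2 - a.2 * b.1

lemma pair_indep {a b : ℝ × ℝ} (h : crossP a b ≠ 0)
    {s t : ℝ} (hst : s • a + t • b = 0) : s = 0 ∧ t = 0 := by
  have h1 : s * a.1 + t * b.1 = 0 := by
    have := congrArg Prod.fst hst; simpa using this
  have h2 : s * a.2 + t * b.2 = 0 := by
    have := congrArg Prod.snd hst; simpa using this
  unfold crossP at h
  constructor
  · by_contra hs
    exact h (by
      have hz : s * (a.1 * b.2 - a.2 * b.1) = 0 := by linear_combination b.2 * h1 - b.1 * h2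
      exact (mul_eq_zero.mp hz).resolve_left hs)
  · by_contra ht
    exact h (by
      have hz : t * (a.1 * b.2 - a.2 * b.1) = 0 := by linear_combination a.1 * h2 - a.2 * h1
      exact (mul_eq_zero.mp hz).resolve_left ht)

lemma edgeVec_apply_of_ne {V : Type*} {p : V → ℝ × ℝ} {a b v : V} (ha : v ≠ a) (hb : v ≠ b) :
    edgeVec p a b v = 0 := by simp [edgeVec, ha, hb]

lemma edgeVec_apply_fst {V : Type*} (p : V → ℝ × ℝ) (a b : V) :
    edgeVec p a b a = p a - p b := by simp [edgeVec]

lemma edgeVec_symm {V : Type*} (p : V → ℝ × ℝ) {a b : V} (hab : a ≠ b) :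
    edgeVec p b a = edgeVec p a b := by
  classical
  funext v
  by_cases hva : v = a <;> by_cases hvb : v = b <;> simp_all [edgeVec]

lemma edgeVec_congr {V : Type*} {p q : V → ℝ × ℝ} {a b : V} (ha : p a = q a) (hb : p b = q b) :
    edgeVec p a b = edgeVec q a b := by
  classical
  funext v
  simp only [edgeVec]
  split_ifs <;> simp [ha, hb]

lemma edgeVec_affine {V : Type*} (p0 p1 : V → ℝ × ℝ) (t : ℝ) (a b : V) :
    edgeVec (fun v => p0 v + t • (p1 v - p0 v)) a b
      = edgeVec p0 a b + t • (edgeVec p1 a b - edgeVec p0 a b) := by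
  classical
  funext v
  simp only [edgeVec, Pi.add_apply, Pi.smul_apply, Pi.sub_apply]
  split_ifs
  · simp only [smul_sub]; abel
  · simp only [smul_sub]; abel
  · simp

open Polynomial in
lemma exists_perturb {V : Type*} [Fintype V] (F : Set (Sym2 V)) (p0 p1 : V → ℝ × ℝ) :
    ∃ s : Set ℝ, s.Finite ∧ ∀ t ∉ s,
      rankOf p0 F ≤ rankOf (fun v => p0 v + t • (p1 v - p0 v)) F := by
  classical
  obtain ⟨b, hbsub, hbspan, hbli⟩ := exists_linearIndependent ℝ (edgeVecs p0 F)
  have hbfin : b.Finite := hbli.setFinite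
  haveI := hbfin.fintype
  have hrep : ∀ x : b, ∃ a c : V, s(a, c) ∈ F ∧ (x : V → ℝ × ℝ) = edgeVec p0 a c :=
    fun x => hbsub x.2
  choose av cv hmem hvec using hrep
  set B := Basis.extend hbli with hB
  have hbmem : ∀ m : b, (m : V → ℝ × ℝ) ∈ LinearIndepOn.extend (v := id) hbli (Set.subset_univ b) :=
    fun m => LinearIndepOn.subset_extend (v := id) hbli _ m.2
  set L : (V → ℝ × ℝ) →ₗ[ℝ] (b → ℝ) :=
    LinearMap.pi (fun m => (Finsupp.lapply
      (⟨(m : V → ℝ × ℝ), hbmem m⟩ : LinearIndepOn.extend (v := id) hbli (Set.subset_univ b))).comp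
        B.repr.toLinearMap) with hL
  have hLapp : ∀ (x : V → ℝ × ℝ) (m : b), L x m = B.repr x ⟨(m : V → ℝ × ℝ), hbmem m⟩ := by
    intro x m; rfl
  have hLself : ∀ m m' : b, L (m' : V → ℝ × ℝ) m = if m = m' then 1 else 0 := by
    intro m m'
    rw [hLapp]
    have : (m' : V → ℝ × ℝ) = B ⟨(m' : V → ℝ × ℝ), hbmem m'⟩ := by
      rw [hB]; exact (Basis.extend_apply_self hbli ⟨(m' : V → ℝ × ℝ), hbmem m'⟩).symm
    rw [this, Basis.repr_self, Finsupp.single_apply]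
    by_cases h : m = m'
    · subst h; simp
    · have hne : (⟨(m' : V → ℝ × ℝ), hbmem m'⟩ : LinearIndepOn.extend (v := id) hbli (Set.subset_univ b))
          ≠ ⟨(m : V → ℝ × ℝ), hbmem m⟩ := by
        intro hc; exact h (Subtype.ext (Subtype.mk_eq_mk.mp hc).symm)
      simp [hne, h]
  set d : b → (V → ℝ × ℝ) := fun m => edgeVec p1 (av m) (cv m) - edgeVec p0 (av m) (cv m) with hd
  set P : Matrix b b ℝ[X] := Matrix.of (fun m m' => C (L (m' : V → ℝ × ℝ) m) + X * C (L (d m') m))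
    with hP
  set g : ℝ[X] := P.det with hg
  have hevalmat : ∀ t : ℝ, (RingHom.mapMatrix (evalRingHom t)) P
      = Matrix.of (fun m m' : b => L ((m' : V → ℝ × ℝ) + t • d m') m) := by
    intro t
    ext m m'
    simp [hP, map_add, map_smul, Pi.add_apply, Pi.smul_apply, smul_eq_mul]
    ring
  have hgeval : ∀ t : ℝ, eval t g = (Matrix.of (fun m m' : b =>
      L ((m' : V → ℝ × ℝ) + t • d m') m)).det := by
    intro t
    rw [hg, ← hevalmat]
    exact (RingHom.map_det (evalRingHom t) P)
  have hg0 : eval 0 g = 1 := by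
    rw [hgeval]
    have : (Matrix.of (fun m m' : b => L ((m' : V → ℝ × ℝ) + (0:ℝ) • d m') m))
        = (1 : Matrix b b ℝ) := by
      ext m m'
      simp [hLself, Matrix.one_apply]
    rw [this, Matrix.det_one]
  have hgne : g ≠ 0 := fun h => by simp [h] at hg0
  refine ⟨{t | g.IsRoot t}, Polynomial.finite_setOf_isRoot hgne, ?_⟩
  intro t ht
  set pt : V → ℝ × ℝ := fun v => p0 v + t • (p1 v - p0 v) with hpt
  set vt : b → (V → ℝ × ℝ) := fun m => edgeVec pt (av m) (cv m) with hvt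
  have hvt' : ∀ m, vt m = (m : V → ℝ × ℝ) + t • d m := by
    intro m
    rw [hvt]
    simp only [hpt]
    rw [edgeVec_affine]
    simp only [hd]
    rw [← hvec m]
  have hdet : (Matrix.of (fun m m' : b => L (vt m') m)).det ≠ 0 := by
    have : (Matrix.of (fun m m' : b => L (vt m') m))
        = Matrix.of (fun m m' : b => L ((m' : V → ℝ × ℝ) + t • d m') m) := by
      ext m m'
      simp only [Matrix.of_apply]
      rw [hvt' m']
    rw [this, ← hgeval]
    exact ht
  have hli : LinearIndependent ℝ vt := by
    rw [Fintype.linearIndependent_iff]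
    intro gcoef hsum
    have hmv : (Matrix.of (fun m m' : b => L (vt m') m)).mulVec gcoef = 0 := by
      funext m
      have := congrArg (fun x => L x m) hsum
      simp only [map_sum, map_smul, map_zero] at this
      simpa [Matrix.mulVec, dotProduct, mul_comm] using this
    intro m
    have := Matrix.eq_zero_of_mulVec_eq_zero hdet hmv
    exact congrFun this m
  -- conclude
  have hr0 : rankOf p0 F = Fintype.card b := by
    rw [rankOf, ← hbspan, finrank_span_set_eq_card hbli, Set.toFinset_card]
  have hsub2 : Set.range vt ⊆ edgeVecs pt F := by
    rintro x ⟨m, rfl⟩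
    exact ⟨av m, cv m, hmem m, rfl⟩
  have : Fintype.card b ≤ rankOf pt F := by
    rw [← finrank_span_eq_card hli]
    exact Submodule.finrank_mono (Submodule.span_mono hsub2)
  omega

lemma edgeVec_apply_fst' {V : Type*} (p : V → ℝ × ℝ) (a b : V) :
    edgeVec p a b a = p a - p b := by simp [edgeVec]

lemma edgeVec_apply_snd' {V : Type*} (p : V → ℝ × ℝ) {a b : V} (hab : a ≠ b) :
    edgeVec p a b b = p b - p a := by simp [edgeVec, Ne.symm hab]

lemma rank_add_two {V : Type*} [Fintype V] [DecidableEq V] (p : V → ℝ × ℝ) (F : Set (Sym2 V)) (w i j k : V)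
    (hw : ∀ a b : V, s(a, b) ∈ F → a ≠ w ∧ b ≠ w)
    (hijF : s(i, j) ∈ F)
    (hwi : w ≠ i) (hwj : w ≠ j) (hwk : w ≠ k) (hij : i ≠ j)
    (hcross : crossP (p j - p i) (p k - p i) ≠ 0) :
    rankOf p F + 2 ≤ rankOf (Function.update p w ((2:ℝ) • p j - p i))
      ((F \ {s(i, j)}) ∪ {s(w, i), s(w, j), s(w, k)}) := by
  classical
  set q : ℝ × ℝ := (2:ℝ) • p j - p i with hq
  set p' : V → ℝ × ℝ := Function.update p w q with hp'
  set F' : Set (Sym2 V) := (F \ {s(i, j)}) ∪ {s(w, i), s(w, j), s(w, k)} with hF'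
  have hp'w : p' w = q := Function.update_self _ _ _
  have hp'ne : ∀ v : V, v ≠ w → p' v = p v := fun v hv => Function.update_of_ne hv _ _
  have hp'i : p' i = p i := hp'ne i (Ne.symm hwi)
  have hp'j : p' j = p j := hp'ne j (Ne.symm hwj)
  have hp'k : p' k = p k := hp'ne k (Ne.symm hwk)
  set u1 : V → ℝ × ℝ := edgeVec p' w i with hu1
  set uj : V → ℝ × ℝ := edgeVec p' w j with huj
  set u2 : V → ℝ × ℝ := edgeVec p' w k with hu2
  set W : Submodule ℝ (V → ℝ × ℝ) := span ℝ (edgeVecs p F) with hW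
  set M : Submodule ℝ (V → ℝ × ℝ) := span ℝ (edgeVecs p' F') with hM
  -- memberships in F'
  have hwiF' : s(w, i) ∈ F' := Or.inr (by simp)
  have hwjF' : s(w, j) ∈ F' := Or.inr (by simp)
  have hwkF' : s(w, k) ∈ F' := Or.inr (by simp)
  have hu1M : u1 ∈ M := subset_span ⟨w, i, hwiF', rfl⟩
  have hujM : uj ∈ M := subset_span ⟨w, j, hwjF', rfl⟩
  have hu2M : u2 ∈ M := subset_span ⟨w, k, hwkF', rfl⟩
  -- values of u1, uj, u2
  have hu1w : u1 w = q - p i := by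
    rw [hu1, show edgeVec p' w i w = p' w - p' i by simp [edgeVec], hp'w, hp'i]
  have hujw : uj w = q - p j := by
    rw [huj, show edgeVec p' w j w = p' w - p' j by simp [edgeVec], hp'w, hp'j]
  have hu2w : u2 w = q - p k := by
    rw [hu2, show edgeVec p' w k w = p' w - p' k by simp [edgeVec], hp'w, hp'k]
  have hu1i : u1 i = p i - q := by
    rw [hu1, show edgeVec p' w i i = p' i - p' w by simp [edgeVec, Ne.symm hwi], hp'w, hp'i]
  have hujj : uj j = p j - q := by
    rw [huj, show edgeVec p' w j j = p' j - p' w by simp [edgeVec, Ne.symm hwj], hp'w, hp'j]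
  have huji : uj i = 0 := by rw [huj]; exact edgeVec_apply_of_ne (Ne.symm hwi) hij
  have hu1j : u1 j = 0 := by rw [hu1]; exact edgeVec_apply_of_ne (Ne.symm hwj) (Ne.symm hij)
  -- key identity
  have hkey : u1 - (2:ℝ) • uj = (2:ℝ) • edgeVec p i j := by
    funext v
    simp only [Pi.sub_apply, Pi.smul_apply]
    by_cases hvw : v = w
    · rw [hvw, hu1w, hujw, edgeVec_apply_of_ne hwi hwj, hq]
      rw [Prod.ext_iff]
      constructor <;>
        (simp only [Prod.fst_sub, Prod.snd_sub, Prod.smul_fst, Prod.smul_snd, smul_eq_mul,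
          Prod.fst_zero, Prod.snd_zero]; ring)
    · by_cases hvi : v = i
      · rw [hvi, hu1i, huji, edgeVec_apply_fst', hq]
        rw [Prod.ext_iff]
        constructor <;>
          (simp only [Prod.fst_sub, Prod.snd_sub, Prod.smul_fst, Prod.smul_snd, smul_eq_mul,
            Prod.fst_zero, Prod.snd_zero]; ring)
      · by_cases hvj : v = j
        · rw [hvj, hu1j, hujj, edgeVec_apply_snd' p hij, hq]
          rw [Prod.ext_iff]
          constructor <;>
            (simp only [Prod.fst_sub, Prod.snd_sub, Prod.smul_fst, Prod.smul_snd, smul_eq_mul,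
              Prod.fst_zero, Prod.snd_zero]; ring)
        · have h1 : u1 v = 0 := by rw [hu1]; exact edgeVec_apply_of_ne hvw hvi
          have h2 : uj v = 0 := by rw [huj]; exact edgeVec_apply_of_ne hvw hvj
          rw [h1, h2, edgeVec_apply_of_ne hvi hvj]
          simp
  have hvijM : edgeVec p i j ∈ M := by
    have : edgeVec p i j = (2:ℝ)⁻¹ • (u1 - (2:ℝ) • uj) := by
      rw [hkey, smul_smul]; norm_num
    rw [this]
    exact M.smul_mem _ (M.sub_mem hu1M (M.smul_mem _ hujM))
  -- W ≤ M
  have hWM : W ≤ M := by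
    rw [hW, span_le]
    rintro x ⟨a, c, hac, rfl⟩
    by_cases hx : s(a, c) = s(i, j)
    · rcases Sym2.eq_iff.mp hx with ⟨rfl, rfl⟩ | ⟨rfl, rfl⟩
      · exact hvijM
      · rw [edgeVec_symm p hij]; exact hvijM
    · have hac' : s(a, c) ∈ F' := Or.inl ⟨hac, hx⟩
      have haw := (hw a c hac).1
      have hcw := (hw a c hac).2
      have : edgeVec p a c = edgeVec p' a c :=
        edgeVec_congr (hp'ne a haw).symm (hp'ne c hcw).symm
      rw [this]
      exact subset_span ⟨a, c, hac', rfl⟩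
  -- W vanishes at w
  have hWker : ∀ x ∈ W, x w = 0 := by
    have : W ≤ LinearMap.ker (LinearMap.proj (R := ℝ) (φ := fun _ : V => ℝ × ℝ) w) := by
      rw [hW, span_le]
      rintro x ⟨a, c, hac, rfl⟩
      simp only [SetLike.mem_coe, LinearMap.mem_ker, LinearMap.proj_apply]
      exact edgeVec_apply_of_ne (Ne.symm (hw a c hac).1) (Ne.symm (hw a c hac).2)
    intro x hx
    exact LinearMap.mem_ker.mp (this hx)
  have hcross2 : crossP (q - p i) (q - p k) ≠ 0 := by
    have : crossP (q - p i) (q - p k) = -2 * crossP (p j - p i) (p k - p i) := by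
      simp only [crossP, hq, Prod.fst_sub, Prod.snd_sub, Prod.smul_fst, Prod.smul_snd,
        smul_eq_mul]
      ring
    rw [this]
    simpa using hcross
  -- U and its properties
  set U : Submodule ℝ (V → ℝ × ℝ) := span ℝ {u1, u2} with hU
  have hUM : U ≤ M := by
    rw [hU, span_le]
    rintro x (rfl | rfl)
    · exact hu1M
    · exact hu2M
  have hWU : W ⊓ U = ⊥ := by
    rw [eq_bot_iff]
    rintro x ⟨hxW, hxU⟩
    obtain ⟨s, t, hst⟩ := Submodule.mem_span_pair.mp hxU
    have hxw : x w = 0 := hWker x hxW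
    have : s • (q - p i) + t • (q - p k) = 0 := by
      rw [← hu1w, ← hu2w]
      have := congrFun hst w
      simp only [Pi.add_apply, Pi.smul_apply] at this
      rw [this, hxw]
    obtain ⟨rfl, rfl⟩ := pair_indep hcross2 this
    simp only [zero_smul, add_zero] at hst
    simp [← hst]
  have hUrank : finrank ℝ U = 2 := by
    have hli : LinearIndependent ℝ ![u1, u2] := by
      rw [LinearIndependent.pair_iff]
      intro s t hst
      have : s • (q - p i) + t • (q - p k) = 0 := by
        rw [← hu1w, ← hu2w]
        have := congrFun hst w
        simpa using this
      exact pair_indep hcross2 this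
    have hrange : Set.range ![u1, u2] = {u1, u2} := by
      ext x
      simp [Fin.exists_fin_two, or_comm]
    rw [hU, ← hrange, finrank_span_eq_card hli]
    simp
  have hsup : finrank ℝ (W ⊔ U : Submodule ℝ (V → ℝ × ℝ)) = finrank ℝ W + 2 := by
    have := Submodule.finrank_sup_add_finrank_inf_eq W U
    rw [hWU] at this
    simp only [finrank_bot] at this
    omega
  have hle : (W ⊔ U) ≤ M := sup_le hWM hUM
  calc rankOf p F + 2 = finrank ℝ W + 2 := rfl
    _ = finrank ℝ (W ⊔ U : Submodule ℝ (V → ℝ × ℝ)) := hsup.symm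
    _ ≤ finrank ℝ M := Submodule.finrank_mono hle
    _ = rankOf p' F' := rfl


open Module Submodule Polynomial

/-- If `w` is a vertex of degree exactly 3 with incident edges `{w,i}, {w,j}, {w,k}` and
`{i,j} ∉ E`, then for `G' = (V, (E ∪ {{i,j}}) \ {{w,i},{w,j},{w,k}})` we have
`s(G) ≤ s(G')`. -/
theorem genStress_le_one_extension_three {V : Type*} [Fintype V] (G : SimpleGraph V)
    (w i j k : V) (hi : G.Adj w i) (hj : G.Adj w j) (hk : G.Adj w k)
    (hij : i ≠ j) (hjk : j ≠ k) (hik : i ≠ k)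
    (hdeg : Nat.card (G.neighborSet w) = 3)
    (hnadj : ¬ G.Adj i j) :
    genStress G ≤ genStress (SimpleGraph.fromEdgeSet
      ((G.edgeSet ∪ {s(i, j)}) \ {s(w, i), s(w, j), s(w, k)})) := by
  classical
  set E : Set (Sym2 V) := G.edgeSet with hE
  set A : Set (Sym2 V) := {s(w, i), s(w, j), s(w, k)} with hA
  set E' : Set (Sym2 V) := (E ∪ {s(i, j)}) \ A with hE'
  have hwi : w ≠ i := hi.ne
  have hwj : w ≠ j := hj.ne
  have hwk : w ≠ k := hk.ne
  -- the edge set of the new graph is `E'`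
  have hnd : ∀ e ∈ E', ¬ e.IsDiag := by
    rintro e ⟨he, -⟩ hd
    rcases he with he | he
    · exact G.not_isDiag_of_mem_edgeSet he hd
    · rw [Set.mem_singleton_iff] at he
      subst he
      exact hij (Sym2.mk_isDiag_iff.mp hd)
  have hG'edge : (SimpleGraph.fromEdgeSet E').edgeSet = E' := by
    rw [SimpleGraph.edgeSet_fromEdgeSet]
    ext e
    simp only [Set.mem_diff, Set.mem_setOf_eq]
    exact ⟨fun h => h.1, fun h => ⟨h, hnd e h⟩⟩
  -- the neighbor set of w
  have hnbr : G.neighborSet w = {i, j, k} := by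
    have hsub : ({i, j, k} : Set V) ⊆ G.neighborSet w := by
      rintro x (rfl | rfl | rfl)
      · exact hi
      · exact hj
      · exact hk
    have hcard3 : ({i, j, k} : Set V).ncard = 3 := by
      rw [Set.ncard_insert_of_notMem (by simp [hij, hik]) (Set.toFinite _),
        Set.ncard_pair hjk]
    have hncard : (G.neighborSet w).ncard = 3 := by
      rw [← Nat.card_coe_set_eq]
      exact hdeg
    exact (Set.eq_of_subset_of_ncard_le hsub (by omega) (Set.toFinite _)).symm
  -- edges of E' avoid w
  have hkeyne : ∀ a b : V, s(a, b) ∈ E ∪ {s(i, j)} → s(a, b) ∉ A → a ≠ w := by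
    intro a b hab hnA haw
    rw [haw] at hab hnA
    rcases hab with hab | hab
    · have hb : b ∈ G.neighborSet w := G.mem_edgeSet.mp hab
      rw [hnbr] at hb
      simp only [Set.mem_insert_iff, Set.mem_singleton_iff] at hb
      rcases hb with rfl | rfl | rfl
      · exact hnA (by simp [hA])
      · exact hnA (by simp [hA])
      · exact hnA (by simp [hA])
    · rw [Set.mem_singleton_iff] at hab
      rcases Sym2.eq_iff.mp hab with ⟨h1, -⟩ | ⟨h1, -⟩
      · exact hwi h1
      · exact hwj h1
  have hmain : ∀ a b : V, s(a, b) ∈ E' → a ≠ w ∧ b ≠ w := by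
    rintro a b ⟨hab, hnA⟩
    have hab' : s(b, a) ∈ E ∪ {s(i, j)} := by
      rw [show s(b, a) = s(a, b) from Sym2.eq_swap]; exact hab
    have hnA' : s(b, a) ∉ A := by
      rw [show s(b, a) = s(a, b) from Sym2.eq_swap]; exact hnA
    exact ⟨hkeyne a b hab hnA, hkeyne b a hab' hnA'⟩
  -- s(i,j) is in E'
  have hijE' : s(i, j) ∈ E' := by
    refine ⟨Or.inr rfl, ?_⟩
    intro hmemA
    simp only [hA, Set.mem_insert_iff, Set.mem_singleton_iff] at hmemA
    rcases hmemA with h | h | h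
    · rcases Sym2.eq_iff.mp h with ⟨h1, -⟩ | ⟨-, h2⟩
      · exact hwi h1.symm
      · exact hwj h2.symm
    · rcases Sym2.eq_iff.mp h with ⟨h1, -⟩ | ⟨h1, -⟩
      · exact hwi h1.symm
      · exact hij h1
    · rcases Sym2.eq_iff.mp h with ⟨h1, -⟩ | ⟨h1, -⟩
      · exact hwi h1.symm
      · exact hik h1
  -- A ⊆ E
  have hAsubE : A ⊆ E := by
    intro e he
    simp only [hA, Set.mem_insert_iff, Set.mem_singleton_iff] at he
    rcases he with rfl | rfl | rfl
    · exact G.mem_edgeSet.mpr hi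
    · exact G.mem_edgeSet.mpr hj
    · exact G.mem_edgeSet.mpr hk
  have hijnE : s(i, j) ∉ E := fun h => hnadj (G.mem_edgeSet.mp h)
  -- (E' \ {s(i,j)}) ∪ A = E
  have hEeq : (E' \ {s(i, j)}) ∪ A = E := by
    ext e
    simp only [hE', Set.mem_union, Set.mem_diff, Set.mem_singleton_iff]
    constructor
    · rintro (⟨⟨he | he, -⟩, hne⟩ | heA)
      · exact he
      · exact absurd he hne
      · exact hAsubE heA
    · intro he
      by_cases heA : e ∈ A
      · exact Or.inr heA
      · exact Or.inl ⟨⟨Or.inl he, heA⟩, fun h => hijnE (h ▸ he)⟩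
  -- cardinalities
  have hA3 : A.ncard = 3 := by
    have h12 : s(w, i) ≠ s(w, j) := by
      intro h
      rcases Sym2.eq_iff.mp h with ⟨-, h2⟩ | ⟨h1, -⟩
      · exact hij h2
      · exact hwj h1
    have h13 : s(w, i) ≠ s(w, k) := by
      intro h
      rcases Sym2.eq_iff.mp h with ⟨-, h2⟩ | ⟨h1, -⟩
      · exact hik h2
      · exact hwk h1
    have h23 : s(w, j) ≠ s(w, k) := by
      intro h
      rcases Sym2.eq_iff.mp h with ⟨-, h2⟩ | ⟨h1, -⟩
      · exact hjk h2
      · exact hwk h1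
    rw [hA, Set.ncard_insert_of_notMem (by simp [h12, h13]) (Set.toFinite _),
      Set.ncard_pair h23]
  have hE'card : E'.ncard = E.ncard + 1 - 3 := by
    rw [hE', Set.ncard_diff (hAsubE.trans Set.subset_union_left) (Set.toFinite _),
      Set.union_singleton, Set.ncard_insert_of_notMem hijnE (Set.toFinite _), hA3]
  -- boundedness of the rank function
  have hbdd : ∀ F : Set (Sym2 V), BddAbove (Set.range fun p : V → ℝ × ℝ => rankOf p F) := by
    intro F
    refine ⟨Module.finrank ℝ (V → ℝ × ℝ), ?_⟩
    rintro x ⟨p, rfl⟩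
    exact Submodule.finrank_le _
  -- a configuration attaining the generic rank of E'
  have hex : ∃ p0 : V → ℝ × ℝ, rankOf p0 E' = genRankSet E' := by
    have hne : (Set.range fun p : V → ℝ × ℝ => rankOf p E').Nonempty :=
      ⟨rankOf (fun _ => 0) E', ⟨_, rfl⟩⟩
    have hmem := Nat.sSup_mem hne (hbdd E')
    obtain ⟨p0, hp0⟩ := hmem
    exact ⟨p0, hp0⟩
  obtain ⟨p0, hp0⟩ := hex
  -- a moment-curve configuration
  obtain ⟨f, hf⟩ := exists_injective_nat V
  set g : V → ℝ := fun v => (f v : ℝ) with hg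
  have hginj : Function.Injective g := fun a b h => hf (Nat.cast_injective h)
  set p1 : V → ℝ × ℝ := fun v => (g v, (g v) ^ 2) with hp1
  have hp1cross : crossP (p1 j - p1 i) (p1 k - p1 i) ≠ 0 := by
    have hcalc : crossP (p1 j - p1 i) (p1 k - p1 i)
        = (g j - g i) * (g k - g i) * (g k - g j) := by
      simp only [crossP, hp1, Prod.fst_sub, Prod.snd_sub]
      ring
    rw [hcalc]
    exact mul_ne_zero (mul_ne_zero (sub_ne_zero.mpr (hginj.ne hij.symm))
      (sub_ne_zero.mpr (hginj.ne hik.symm))) (sub_ne_zero.mpr (hginj.ne hjk.symm))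
  -- perturbation
  obtain ⟨S1, hS1fin, hS1⟩ := exists_perturb E' p0 p1
  -- the collinearity polynomial
  set a0 : ℝ × ℝ := p0 j - p0 i with ha0
  set b0 : ℝ × ℝ := (p1 j - p1 i) - a0 with hb0
  set a1 : ℝ × ℝ := p0 k - p0 i with ha1
  set b1 : ℝ × ℝ := (p1 k - p1 i) - a1 with hb1
  set c : Polynomial ℝ := (C a0.1 + X * C b0.1) * (C a1.2 + X * C b1.2)
    - (C a0.2 + X * C b0.2) * (C a1.1 + X * C b1.1) with hc
  have hceval : ∀ t : ℝ, c.eval t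
      = crossP ((p0 j + t • (p1 j - p0 j)) - (p0 i + t • (p1 i - p0 i)))
        ((p0 k + t • (p1 k - p0 k)) - (p0 i + t • (p1 i - p0 i))) := by
    intro t
    simp only [hc, eval_sub, eval_add, eval_mul, eval_C, eval_X, crossP, hb0, ha0, hb1, ha1,
      Prod.fst_sub, Prod.snd_sub, Prod.fst_add, Prod.snd_add, Prod.smul_fst, Prod.smul_snd,
      smul_eq_mul]
    ring
  have hone : ∀ v : V, p0 v + (1:ℝ) • (p1 v - p0 v) = p1 v := by
    intro v
    rw [one_smul]
    abel
  have hc1 : c.eval 1 = crossP (p1 j - p1 i) (p1 k - p1 i) := by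
    rw [hceval 1, hone, hone, hone]
  have hcne : c ≠ 0 := by
    intro h
    apply hp1cross
    rw [← hc1, h, eval_zero]
  -- choose a good parameter t
  have hbad : (S1 ∪ {t : ℝ | c.IsRoot t}).Finite :=
    hS1fin.union (Polynomial.finite_setOf_isRoot hcne)
  obtain ⟨t, ht⟩ := hbad.infinite_compl.nonempty
  have htS1 : t ∉ S1 := fun h => ht (Or.inl h)
  have htc : ¬ c.IsRoot t := fun h => ht (Or.inr h)
  set p : V → ℝ × ℝ := fun v => p0 v + t • (p1 v - p0 v) with hp
  have hpv : ∀ v : V, p v = p0 v + t • (p1 v - p0 v) := fun v => by rw [hp]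
  have hrankp : genRankSet E' ≤ rankOf p E' := by
    rw [← hp0, hp]
    exact hS1 t htS1
  have hcrossp : crossP (p j - p i) (p k - p i) ≠ 0 := by
    rw [hpv, hpv, hpv, ← hceval t]
    exact htc
  -- apply the key rank lemma
  have hkey := rank_add_two p E' w i j k hmain hijE' hwi hwj hwk hij hcrossp
  rw [← hA, hEeq] at hkey
  have hrankE : genRankSet E' + 2 ≤ genRankSet E := by
    calc genRankSet E' + 2 ≤ rankOf p E' + 2 := by omega
      _ ≤ rankOf (Function.update p w ((2:ℝ) • p j - p i)) E := hkey
      _ ≤ genRankSet E := le_ciSup (hbdd E) _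
  -- final arithmetic
  rw [genStress, genStress, genRank, genRank, hG'edge, ← hE]
  omega
end
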